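/- Let Σ be a p×p positive definite matrix and for each permutation σ let ω_j^σ = Var(X_j | X_{PRED_j(σ)}) for X ~ N(0, Σ). Suppose ω_1^ι ≤ ω_2^ι ≤ ... ≤ ω_p^ι where ι is the identity permutation. Then for any permutation σ, the nondecreasing rearrangement (v_1,...,v_p) of (ω_1^σ,...,ω_p^σ) satisfies: (log v_1,...,log v_p) majorizes (log ω_1^ι,...,log ω_p^ι). -/

import Mathlib

open Matrix BigOperators

/-- Conditional variance of coordinate `j` of a centered Gaussian vector with covariance `S`,
given the coordinates in the index set `A`, i.e. the Schur complement
`S j j - S_{jA} (S_{AA})⁻¹ S_{Aj}`. -/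
noncomputable def condVar {p : ℕ} (S : Matrix (Fin p) (Fin p) ℝ) (j : Fin p)
    (A : Finset (Fin p)) : ℝ :=
  S j j - ∑ s : A, ∑ t : A,
    S j s.1 * (Matrix.of fun a b : A => S a.1 b.1)⁻¹ s t * S t.1 j

/-- The set of predecessors of node `j` under the ordering `σ`. -/
def PRED {p : ℕ} (σ : Equiv.Perm (Fin p)) (j : Fin p) : Finset (Fin p) :=
  Finset.univ.filter fun i => σ.symm i < σ.symm j

/-- `a` majorizes `b`: both sorted nondecreasingly, the partial sums of the `k` largest
entries of `a` dominate those of `b` for every `k`, and the total sums agree. -/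
def Majorizes {p : ℕ} (a b : Fin p → ℝ) : Prop :=
  Monotone a ∧ Monotone b ∧
    (∀ m : Fin p, ∑ j ∈ Finset.Ici m, b j ≤ ∑ j ∈ Finset.Ici m, a j) ∧
    (∑ j, a j = ∑ j, b j)

namespace Stmt9Aux

variable {p : ℕ} {S : Matrix (Fin p) (Fin p) ℝ}

/-- The principal submatrix of `S` on the index set `A`. -/
noncomputable def subm (S : Matrix (Fin p) (Fin p) ℝ) (A : Finset (Fin p)) :
    Matrix A A ℝ := Matrix.of fun a b : A => S a.1 b.1

/-- `condVar` written in terms of `subm`. -/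
noncomputable def condVar' (S : Matrix (Fin p) (Fin p) ℝ) (j : Fin p)
    (A : Finset (Fin p)) : ℝ :=
  S j j - ∑ s : A, ∑ t : A, S j s.1 * (subm S A)⁻¹ s t * S t.1 j

lemma condVar'_eq (j : Fin p) (A : Finset (Fin p)) : condVar' S j A = condVar S j A := rfl

/-- Extension of a vector on `↥A` by zero. -/
noncomputable def extVec (A : Finset (Fin p)) (x : A → ℝ) : Fin p → ℝ :=
  fun i => if h : i ∈ A then x ⟨i, h⟩ else 0

lemma mulVec_extVec (A : Finset (Fin p)) (x : A → ℝ) (i : Fin p) :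
    S.mulVec (extVec A x) i = ∑ b : A, S i b.1 * x b := by
  have h1 : S.mulVec (extVec A x) i = ∑ k ∈ A, S i k * extVec A x k := by
    rw [mulVec, dotProduct]
    refine (Finset.sum_subset A.subset_univ fun k _ hk => ?_).symm
    simp [extVec, hk]
  rw [h1, ← Finset.sum_coe_sort A (fun k => S i k * extVec A x k)]
  refine Finset.sum_congr rfl fun b _ => ?_
  simp [extVec, b.2]

lemma quad_ext (A : Finset (Fin p)) (x : A → ℝ) :
    extVec A x ⬝ᵥ S.mulVec (extVec A x) = x ⬝ᵥ (subm S A).mulVec x := by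
  rw [dotProduct]
  have h1 : ∀ i ∈ Finset.univ, i ∉ A → extVec A x i * S.mulVec (extVec A x) i = 0 := by
    intro i _ hi; simp [extVec, hi]
  rw [← Finset.sum_subset A.subset_univ h1,
    ← Finset.sum_coe_sort A (fun i => extVec A x i * S.mulVec (extVec A x) i)]
  refine Finset.sum_congr rfl fun a _ => ?_
  rw [mulVec_extVec]
  simp only [extVec, a.2, dif_pos, Subtype.coe_eta]
  rfl

lemma subPD (hS : S.PosDef) (A : Finset (Fin p)) : (subm S A).PosDef := by
  refine Matrix.PosDef.of_dotProduct_mulVec_pos (hS.1.submatrix _) fun x hx => ?_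
  have hy : extVec A x ≠ 0 := by
    obtain ⟨a, ha⟩ := Function.ne_iff.mp hx
    intro h0
    apply ha
    have := congrFun h0 a.1
    simpa [extVec, a.2] using this
  have h := hS.dotProduct_mulVec_pos hy
  have hst : star (extVec A x) = extVec A x := by funext i; simp
  have hstx : star x = x := by funext i; simp
  rw [hst] at h
  rw [hstx, ← quad_ext]
  exact h

lemma det_insert' (hS : S.PosDef) {j : Fin p} {A A' : Finset (Fin p)} (hj : j ∉ A)
    (hA' : A' = insert j A) :
    (subm S A').det = condVar' S j A * (subm S A).det := by
  subst hA'
  classical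
  letI hInv : Invertible (subm S A) :=
    (subm S A).invertibleOfIsUnitDet (isUnit_iff_ne_zero.mpr (subPD hS A).det_pos.ne')
  let E : {x // x ∈ insert j A} ≃ (A ⊕ PUnit.{1}) :=
    (Finset.subtypeInsertEquivOption hj).trans (Equiv.optionEquivSumPUnit _)
  let M' : Matrix (A ⊕ PUnit.{1}) (A ⊕ PUnit.{1}) ℝ :=
    Matrix.fromBlocks (subm S A) (Matrix.of fun (a : A) (_ : PUnit.{1}) => S a.1 j)
      (Matrix.of fun (_ : PUnit.{1}) (a : A) => S j a.1) (Matrix.of fun _ _ => S j j)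
  have hsub : subm S (insert j A) = M'.submatrix E E := by
    ext x y
    simp only [Matrix.submatrix_apply, E, Equiv.trans_apply,
      Finset.subtypeInsertEquivOption, Equiv.coe_fn_mk]
    split_ifs with h1 h2 h2 <;> simp [M', subm, h1, h2]
  rw [hsub, Matrix.det_submatrix_equiv_self, Matrix.det_fromBlocks₁₁, mul_comm]
  have hentry : (Matrix.of (fun (_ : PUnit.{1}) (a : A) => S j a.1) * ⅟(subm S A) *
      Matrix.of (fun (a : A) (_ : PUnit.{1}) => S a.1 j)) PUnit.unit PUnit.unit
      = ∑ s : A, ∑ t : A, S j s.1 * (subm S A)⁻¹ s t * S t.1 j := by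
    rw [Matrix.invOf_eq_nonsing_inv]
    simp only [Matrix.mul_apply, Matrix.of_apply, Finset.sum_mul]
    rw [Finset.sum_comm]
  congr 1
  rw [Matrix.det_unique]
  show (Matrix.of (fun (_ : PUnit.{1}) (_ : PUnit.{1}) => S j j) -
      Matrix.of (fun (_ : PUnit.{1}) (a : A) => S j a.1) * ⅟(subm S A) *
      Matrix.of (fun (a : A) (_ : PUnit.{1}) => S a.1 j)) PUnit.unit PUnit.unit
      = condVar' S j A
  simp only [Matrix.sub_apply, Matrix.of_apply, condVar']
  rw [hentry]

lemma condVar'_pos (hS : S.PosDef) {j : Fin p} {A : Finset (Fin p)} (hj : j ∉ A) :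
    0 < condVar' S j A := by
  have h1 := (subPD hS (insert j A)).det_pos
  have h2 := (subPD hS A).det_pos
  rw [det_insert' hS hj rfl] at h1
  nlinarith

lemma telescope (hS : S.PosDef) (σ : Equiv.Perm (Fin p)) (C : Finset (Fin p)) :
    (∏ j ∈ C, condVar' S j (PRED σ j ∩ C)) = (subm S C).det := by
  induction C using Finset.strongInduction with
  | _ C ih =>
    rcases C.eq_empty_or_nonempty with rfl | hne
    · simp [Matrix.det_isEmpty]
    · obtain ⟨j, hjC, hmax⟩ := C.exists_max_image (fun i => σ.symm i) hne
      have hPj : PRED σ j ∩ C = C.erase j := by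
        ext i
        simp only [PRED, Finset.mem_inter, Finset.mem_filter, Finset.mem_univ, true_and,
          Finset.mem_erase]
        constructor
        · rintro ⟨hlt, hiC⟩
          exact ⟨fun h => absurd (h ▸ hlt) (lt_irrefl _), hiC⟩
        · rintro ⟨hne', hiC⟩
          exact ⟨lt_of_le_of_ne (hmax i hiC) (fun h => hne' (σ.symm.injective h)), hiC⟩
      have hstep : ∀ i ∈ C.erase j, PRED σ i ∩ C = PRED σ i ∩ C.erase j := by
        intro i hi
        have hiC := Finset.mem_of_mem_erase hi
        ext k
        simp only [PRED, Finset.mem_inter, Finset.mem_filter, Finset.mem_univ, true_and,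
          Finset.mem_erase]
        constructor
        · rintro ⟨hlt, hkC⟩
          refine ⟨hlt, fun h => ?_, hkC⟩
          subst h
          exact absurd hlt (not_lt.mpr (hmax i hiC))
        · rintro ⟨hlt, _, hkC⟩
          exact ⟨hlt, hkC⟩
      rw [← Finset.mul_prod_erase C _ hjC, hPj,
        Finset.prod_congr rfl (fun i hi => by rw [hstep i hi]),
        ih (C.erase j) (Finset.erase_ssubset hjC),
        ← det_insert' hS (Finset.notMem_erase j C) (Finset.insert_erase hjC).symm]

/-- Optimal regression coefficients. -/
noncomputable def cvec (S : Matrix (Fin p) (Fin p) ℝ) (j : Fin p) (A : Finset (Fin p)) :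
    A → ℝ := fun s => ∑ t : A, (subm S A)⁻¹ s t * S t.1 j

/-- The residual vector `e_j` minus the regression part. -/
noncomputable def optVec (S : Matrix (Fin p) (Fin p) ℝ) (j : Fin p) (A : Finset (Fin p)) :
    Fin p → ℝ := fun i => (if i = j then 1 else 0) - extVec A (cvec S j A) i

lemma mulVec_optVec (i : Fin p) (j : Fin p) (A : Finset (Fin p)) :
    S.mulVec (optVec S j A) i = S i j - ∑ b : A, S i b.1 * cvec S j A b := by
  have : optVec S j A = (fun l => if l = j then 1 else 0) - extVec A (cvec S j A) := rfl
  rw [this, Matrix.mulVec_sub, Pi.sub_apply, mulVec_extVec]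
  congr 1
  simp [Matrix.mulVec, dotProduct, mul_ite]

lemma normal_eq (hS : S.PosDef) (j : Fin p) {A : Finset (Fin p)} (s : A) :
    ∑ b : A, S s.1 b.1 * cvec S j A b = S s.1 j := by
  have hmul : subm S A * (subm S A)⁻¹ = 1 :=
    Matrix.mul_nonsing_inv _ (isUnit_iff_ne_zero.mpr (subPD hS A).det_pos.ne')
  calc ∑ b : A, S s.1 b.1 * cvec S j A b
      = ∑ b : A, ∑ u : A, subm S A s b * (subm S A)⁻¹ b u * S u.1 j := by
        simp only [cvec, Finset.mul_sum, subm, Matrix.of_apply, mul_assoc]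
    _ = ∑ u : A, (∑ b : A, subm S A s b * (subm S A)⁻¹ b u) * S u.1 j := by
        rw [Finset.sum_comm]
        simp [Finset.sum_mul]
    _ = ∑ u : A, (1 : Matrix A A ℝ) s u * S u.1 j := by
        refine Finset.sum_congr rfl fun u _ => ?_
        rw [← Matrix.mul_apply, hmul]
    _ = S s.1 j := by simp [Matrix.one_apply, ite_mul]

lemma mulVec_optVec_mem (hS : S.PosDef) {j : Fin p} {A : Finset (Fin p)} {i : Fin p}
    (hi : i ∈ A) : S.mulVec (optVec S j A) i = 0 := by
  rw [mulVec_optVec, normal_eq hS j (⟨i, hi⟩ : A), sub_self]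

lemma mulVec_optVec_self (j : Fin p) (A : Finset (Fin p)) :
    S.mulVec (optVec S j A) j = condVar' S j A := by
  rw [mulVec_optVec, condVar']
  congr 1
  simp only [cvec, Finset.mul_sum]
  refine Finset.sum_congr rfl fun s _ => Finset.sum_congr rfl fun t _ => by ring

lemma optVec_self {j : Fin p} {A : Finset (Fin p)} (hj : j ∉ A) : optVec S j A j = 1 := by
  simp [optVec, extVec, hj]

lemma optVec_zero {j i : Fin p} {A : Finset (Fin p)} (hi : i ∉ A) (hij : i ≠ j) :
    optVec S j A i = 0 := by
  simp [optVec, extVec, hi, hij]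

lemma quad_opt (hS : S.PosDef) {j : Fin p} {A : Finset (Fin p)} (hj : j ∉ A) :
    optVec S j A ⬝ᵥ S.mulVec (optVec S j A) = condVar' S j A := by
  rw [dotProduct]
  have : ∀ i : Fin p, optVec S j A i * S.mulVec (optVec S j A) i
      = if i = j then condVar' S j A else 0 := by
    intro i
    by_cases hij : i = j
    · subst hij
      rw [optVec_self hj, mulVec_optVec_self, one_mul, if_pos rfl]
    · rw [if_neg hij]
      by_cases hi : i ∈ A
      · rw [mulVec_optVec_mem hS hi, mul_zero]
      · rw [optVec_zero hi hij, zero_mul]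
  simp only [this, Finset.sum_ite_eq' Finset.univ, Finset.mem_univ, if_pos]

lemma dot_symm (hS : S.PosDef) (x y : Fin p → ℝ) :
    x ⬝ᵥ S.mulVec y = y ⬝ᵥ S.mulVec x := by
  have hsymm : ∀ i k, S i k = S k i := by
    intro i k
    have := congrFun (congrFun hS.1 k) i
    simpa [Matrix.conjTranspose_apply] using this
  simp only [dotProduct, Matrix.mulVec, Finset.mul_sum]
  rw [Finset.sum_comm]
  exact Finset.sum_congr rfl fun i _ => Finset.sum_congr rfl fun k _ => by
    rw [hsymm i k]; ring

lemma quad_lower (hS : S.PosDef) {j : Fin p} {A : Finset (Fin p)} (hj : j ∉ A)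
    (w : Fin p → ℝ) (hwj : w j = 1) (hsupp : ∀ i, i ∉ A → i ≠ j → w i = 0) :
    condVar' S j A ≤ w ⬝ᵥ S.mulVec w := by
  set v := optVec S j A with hv
  set d := w - v with hd
  have hcross : d ⬝ᵥ S.mulVec v = 0 := by
    rw [dotProduct]
    refine Finset.sum_eq_zero fun i _ => ?_
    by_cases hij : i = j
    · have : d i = 0 := by
        rw [hd, Pi.sub_apply, hij, hwj, hv, optVec_self (S := S) hj, sub_self]
      rw [this, zero_mul]
    · by_cases hi : i ∈ A
      · rw [mulVec_optVec_mem hS hi, mul_zero]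
      · have : d i = 0 := by
          rw [hd, Pi.sub_apply, hsupp i hi hij, hv, optVec_zero (S := S) hi hij, sub_self]
        rw [this, zero_mul]
  have hcross' : v ⬝ᵥ S.mulVec d = 0 := by rw [dot_symm hS]; exact hcross
  have hdd : 0 ≤ d ⬝ᵥ S.mulVec d := by
    have h := hS.posSemidef.dotProduct_mulVec_nonneg d
    have hst : star d = d := by funext i; simp
    rwa [hst] at h
  have hw : w = v + d := by simp [hd]
  rw [hw, Matrix.mulVec_add, dotProduct_add, add_dotProduct, add_dotProduct,
    quad_opt hS hj, hcross, hcross']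
  linarith

lemma condVar'_anti (hS : S.PosDef) {j : Fin p} {A B : Finset (Fin p)} (hAB : A ⊆ B)
    (hjB : j ∉ B) : condVar' S j B ≤ condVar' S j A := by
  have hjA : j ∉ A := fun h => hjB (hAB h)
  have h := quad_lower (A := B) hS hjB (optVec S j A) (optVec_self hjA)
    (fun i hi hij => optVec_zero (fun hiA => hi (hAB hiA)) hij)
  rwa [quad_opt hS hjA] at h

lemma strictMono_le' {k : ℕ} {f : Fin k → Fin p} (hf : StrictMono f) :
    ∀ n (hn : n < k), n ≤ (f ⟨n, hn⟩ : ℕ) := by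
  intro n
  induction n with
  | zero => intro _; exact Nat.zero_le _
  | succ n ih =>
    intro hn
    have h1 : (f ⟨n, Nat.lt_of_succ_lt hn⟩ : ℕ) < (f ⟨n + 1, hn⟩ : ℕ) := by
      have := hf (show (⟨n, Nat.lt_of_succ_lt hn⟩ : Fin k) < ⟨n + 1, hn⟩ by
        simp [Fin.lt_def])
      exact this
    have h2 := ih (Nat.lt_of_succ_lt hn)
    omega

lemma sum_orderEmbOfFin (s : Finset (Fin p)) {k : ℕ} (h : s.card = k) (g : Fin p → ℝ) :
    ∑ x ∈ s, g x = ∑ i : Fin k, g (s.orderEmbOfFin h i) := by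
  refine (Finset.sum_bij (fun (i : Fin k) (_ : i ∈ Finset.univ) => s.orderEmbOfFin h i)
    (fun i _ => Finset.orderEmbOfFin_mem s h i)
    (fun a _ b _ hab => (s.orderEmbOfFin h).injective hab)
    (fun x hx => ?_) (fun i _ => rfl)).symm
  have : x ∈ Set.range (s.orderEmbOfFin h) := by
    rw [Finset.range_orderEmbOfFin]; exact hx
  obtain ⟨i, hi⟩ := this
  exact ⟨i, Finset.mem_univ i, hi⟩

lemma sum_head_le {g : Fin p → ℝ} (hg : Monotone g) {V : Finset (Fin p)} {m : Fin p}
    (hV : V.card = (m : ℕ)) : ∑ k ∈ Finset.Iio m, g k ≤ ∑ k ∈ V, g k := by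
  have hIc : (Finset.Iio m).card = (m : ℕ) := by simp
  rw [sum_orderEmbOfFin V hV g, sum_orderEmbOfFin (Finset.Iio m) hIc g]
  refine Finset.sum_le_sum fun i _ => hg ?_
  have h1 : (((Finset.Iio m).orderEmbOfFin hIc) i : ℕ) = (i : ℕ) := by
    have hφ : (fun i : Fin (m : ℕ) => (⟨(i : ℕ), lt_trans i.2 m.2⟩ : Fin p))
        = (Finset.Iio m).orderEmbOfFin hIc := by
      refine Finset.orderEmbOfFin_unique hIc (fun i => ?_) (fun a b hab => ?_)
      · exact Finset.mem_Iio.mpr (by simpa [Fin.lt_def] using i.2)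
      · exact Fin.mk_lt_mk.mpr hab
    rw [← hφ]
  have h2 : (i : ℕ) ≤ ((V.orderEmbOfFin hV) i : ℕ) := by
    have := strictMono_le' (V.orderEmbOfFin hV).strictMono (i : ℕ) i.2
    simpa using this
  rw [Fin.le_def, h1]
  exact h2

end Stmt9Aux

open Stmt9Aux in
/-- If the error variances `ω_j^ι = Var(X_j | X_1, …, X_{j-1})` under the identity
ordering are weakly increasing, then for any permutation `σ`, the logarithms of the
nondecreasing rearrangement of `(ω_1^σ, …, ω_p^σ)` majorize `(log ω_1^ι, …, log ω_p^ι)`. -/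
theorem stmt9 {p : ℕ} (S : Matrix (Fin p) (Fin p) ℝ) (hS : S.PosDef)
    (hmono : Monotone fun j => condVar S j (Finset.Iio j))
    (σ : Equiv.Perm (Fin p)) :
    Majorizes
      (fun k => Real.log
        ((fun j => condVar S j (PRED σ j)) (Tuple.sort (fun j => condVar S j (PRED σ j)) k)))
      (fun j => Real.log (condVar S j (Finset.Iio j))) := by
  classical
  set f : Fin p → ℝ := fun j => condVar S j (PRED σ j) with hf
  set ω : Fin p → ℝ := fun j => condVar S j (Finset.Iio j) with hω
  have hjP : ∀ j, j ∉ PRED σ j := by intro j; simp [PRED]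
  have hjI : ∀ j : Fin p, j ∉ Finset.Iio j := by intro j; simp
  have hfpos : ∀ j, 0 < f j := fun j => condVar'_pos hS (hjP j)
  have hωpos : ∀ j, 0 < ω j := fun j => condVar'_pos hS (hjI j)
  -- the identity permutation's predecessor sets
  have hP1 : ∀ j : Fin p, PRED (1 : Equiv.Perm (Fin p)) j = Finset.Iio j := by
    intro j; ext i; simp [PRED, Finset.mem_Iio]; exact Iff.rfl
  -- determinant identities
  have hdetIio : ∀ m : Fin p, (∏ j ∈ Finset.Iio m, ω j) = (subm S (Finset.Iio m)).det := by
    intro m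
    rw [← telescope hS 1 (Finset.Iio m)]
    refine Finset.prod_congr rfl fun j hj => ?_
    rw [hP1 j, Finset.inter_eq_left.mpr
      (Finset.Iio_subset_Iio (le_of_lt (Finset.mem_Iio.mp hj)))]
    rfl
  have hdetuniv_ω : (∏ j, ω j) = (subm S Finset.univ).det := by
    rw [← telescope hS 1 Finset.univ]
    exact Finset.prod_congr rfl fun j _ => by rw [Finset.inter_univ, hP1 j]; rfl
  have hdetuniv_f : (∏ j, f j) = (subm S Finset.univ).det := by
    rw [← telescope hS σ Finset.univ]
    exact Finset.prod_congr rfl fun j _ => by rw [Finset.inter_univ]; rfl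
  -- head product inequality
  have hheadprod : ∀ m : Fin p, (∏ j ∈ Finset.Iio m, f j) ≤ ∏ j ∈ Finset.Iio m, ω j := by
    intro m
    calc (∏ j ∈ Finset.Iio m, f j)
        ≤ ∏ j ∈ Finset.Iio m, condVar' S j (PRED σ j ∩ Finset.Iio m) :=
          Finset.prod_le_prod (fun j _ => (hfpos j).le)
            (fun j _ => condVar'_anti hS Finset.inter_subset_left (hjP j))
      _ = (subm S (Finset.Iio m)).det := telescope hS σ (Finset.Iio m)
      _ = ∏ j ∈ Finset.Iio m, ω j := (hdetIio m).symm
  -- monotonicity of the two log-vectors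
  have hamono : Monotone fun k => Real.log (f (Tuple.sort f k)) :=
    fun x y hxy => Real.log_le_log (hfpos _) (Tuple.monotone_sort f hxy)
  have hbmono : Monotone fun j => Real.log (ω j) :=
    fun x y hxy => Real.log_le_log (hωpos _) (hmono hxy)
  -- total sums agree
  have htot : (∑ k, Real.log (f (Tuple.sort f k))) = ∑ j, Real.log (ω j) := by
    rw [Equiv.sum_comp (Tuple.sort f) (fun j => Real.log (f j)),
      ← Real.log_prod (fun j _ => (hfpos j).ne'),
      ← Real.log_prod (fun j _ => (hωpos j).ne'), hdetuniv_f, hdetuniv_ω]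
  -- head sums inequality in log space
  have hhead : ∀ m : Fin p, (∑ k ∈ Finset.Iio m, Real.log (f (Tuple.sort f k)))
      ≤ ∑ j ∈ Finset.Iio m, Real.log (ω j) := by
    intro m
    set V : Finset (Fin p) := (Finset.Iio m).image (Tuple.sort f).symm with hV
    have hVcard : V.card = (m : ℕ) := by
      rw [hV, Finset.card_image_of_injective _ (Equiv.injective _)]
      simp
    have h1 : (∑ k ∈ Finset.Iio m, Real.log (f (Tuple.sort f k)))
        ≤ ∑ k ∈ V, Real.log (f (Tuple.sort f k)) := sum_head_le hamono hVcard
    have h2 : (∑ k ∈ V, Real.log (f (Tuple.sort f k))) = ∑ j ∈ Finset.Iio m, Real.log (f j) := by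
      rw [hV, Finset.sum_image (fun a _ b _ hab => (Equiv.injective _) hab)]
      exact Finset.sum_congr rfl fun j _ => by rw [Equiv.apply_symm_apply]
    have h3 : (∑ j ∈ Finset.Iio m, Real.log (f j)) ≤ ∑ j ∈ Finset.Iio m, Real.log (ω j) := by
      rw [← Real.log_prod (fun j _ => (hfpos j).ne'),
        ← Real.log_prod (fun j _ => (hωpos j).ne')]
      exact Real.log_le_log (Finset.prod_pos fun j _ => hfpos j) (hheadprod m)
    linarith [h1, h2.symm.le, h3]
  -- split sums
  have hIci : ∀ m : Fin p, Finset.Ici m = Finset.univ \ Finset.Iio m := by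
    intro m; ext i; simp [Finset.mem_Ici, Finset.mem_Iio, not_lt]
  have hsplit : ∀ (m : Fin p) (c : Fin p → ℝ),
      (∑ j ∈ Finset.Ici m, c j) = (∑ j, c j) - ∑ j ∈ Finset.Iio m, c j := by
    intro m c
    rw [hIci m, eq_sub_iff_add_eq]
    exact Finset.sum_sdiff (Finset.subset_univ _)
  refine ⟨hamono, hbmono, fun m => ?_, htot⟩
  rw [hsplit m, hsplit m, htot]
  have := hhead m
  linarith
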